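/- Let K = ℚ(√−3) and let i ∈ F denote a square root of −1. For every nonzero a ∈ K, there is no element w ∈ F with w⁴ = a·i. (That is, the square root of a·i is never a square in F.) -/

import Mathlib

open IntermediateField Polynomial

noncomputable def ζ : ℂ := Complex.exp (2 * Real.pi * Complex.I / 24)

lemma hζprim : IsPrimitiveRoot ζ 24 := Complex.isPrimitiveRoot_exp 24 (by norm_num)

lemma hζ24 : ζ ^ 24 = 1 := hζprim.pow_eq_one

lemma expfrac (n : ℕ) (r : ℝ) (h : (n:ℝ) * (2 * Real.pi / 24) = r) :
    ζ ^ n = Real.cos r + Real.sin r * Complex.I := by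
  rw [ζ, ← Complex.exp_nat_mul]
  have : (n:ℂ) * (2 * Real.pi * Complex.I / 24) = (r:ℝ) * Complex.I := by
    rw [← h]; push_cast; ring
  rw [this, Complex.exp_mul_I, Complex.ofReal_cos, Complex.ofReal_sin]

lemma hζ3 : ζ ^ 3 = (Real.sqrt 2 / 2) * (1 + Complex.I) := by
  rw [expfrac 3 (Real.pi/4) (by ring), Real.cos_pi_div_four, Real.sin_pi_div_four]
  push_cast; ring

lemma hζ4 : ζ ^ 4 = 1/2 + (Real.sqrt 3 / 2) * Complex.I := by
  rw [expfrac 4 (Real.pi/3) (by ring), Real.cos_pi_div_three, Real.sin_pi_div_three]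
  push_cast; ring

lemma sqrt2_sq : (Real.sqrt 2 : ℂ)^2 = 2 := by
  rw [← Complex.ofReal_pow, Real.sq_sqrt (by norm_num : (0:ℝ) ≤ 2)]; norm_num

lemma sqrt3_sq : (Real.sqrt 3 : ℂ)^2 = 3 := by
  rw [← Complex.ofReal_pow, Real.sq_sqrt (by norm_num : (0:ℝ) ≤ 3)]; norm_num

lemma hζ6 : ζ ^ 6 = Complex.I := by
  have h : ζ ^ 6 = (ζ^3)^2 := by ring
  rw [h, hζ3]
  have := Complex.I_sq
  linear_combination ((1+Complex.I)^2/4) * sqrt2_sq + (1/2) * Complex.I_sq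

lemma hζ12 : ζ ^ 12 = -1 := by
  have h : ζ ^ 12 = (ζ^6)^2 := by ring
  rw [h, hζ6, Complex.I_sq]

lemma hζ8 : ζ ^ 8 = -1/2 + (Real.sqrt 3 / 2) * Complex.I := by
  have h : ζ ^ 8 = (ζ^4)^2 := by ring
  rw [h, hζ4]
  linear_combination (Complex.I^2/4) * sqrt3_sq + (3/4) * Complex.I_sq

/-- `K = ℚ(√−3)`, realized as a subfield of `ℂ`. -/
noncomputable def K : IntermediateField ℚ ℂ := ℚ⟮(Complex.I * Real.sqrt 3 : ℂ)⟯

/-- `F`, the maximal elementary abelian 2-extension of `K` inside an algebraic closure, i.e.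
the subfield generated over `K` by the square roots of all elements of `K`. -/
noncomputable def F : IntermediateField K ℂ :=
  IntermediateField.adjoin K {x : ℂ | ∃ a : K, x ^ 2 = (a : ℂ)}

noncomputable def F' : IntermediateField ℚ ℂ := F.restrictScalars ℚ

lemma mem_F'_iff {z : ℂ} : z ∈ F' ↔ z ∈ F := Iff.rfl

lemma K_mem_F {z : ℂ} (hz : z ∈ K) : z ∈ F := F.algebraMap_mem ⟨z, hz⟩

lemma gen_mem_K : (Complex.I * Real.sqrt 3 : ℂ) ∈ K :=
  IntermediateField.mem_adjoin_simple_self ℚ _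

lemma I_mem_F : Complex.I ∈ F :=
  subset_adjoin _ _ ⟨-1, by push_cast [Complex.I_sq]; ring⟩

lemma sqrt2_mem_F : (Real.sqrt 2 : ℂ) ∈ F := by
  refine subset_adjoin _ _ ⟨2, ?_⟩
  rw [← Complex.ofReal_pow, Real.sq_sqrt (by norm_num : (0:ℝ) ≤ 2)]
  norm_cast

lemma two_mem_K : (2:ℂ) ∈ K := by
  have := K.add_mem K.one_mem K.one_mem; rw [one_add_one_eq_two] at this; exact this

lemma ζ8_mem_K : ζ^8 ∈ K := by
  have h : ζ^8 = (Complex.I * Real.sqrt 3 - 1)/2 := by rw [hζ8]; ring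
  rw [h]
  exact K.div_mem (K.sub_mem gen_mem_K K.one_mem) two_mem_K

lemma two_mem_F : (2:ℂ) ∈ F := by
  have := F.add_mem F.one_mem F.one_mem; rw [one_add_one_eq_two] at this; exact this

lemma ζ3_mem_F : ζ^3 ∈ F := by
  rw [hζ3]
  exact F.mul_mem (F.div_mem sqrt2_mem_F two_mem_F) (F.add_mem F.one_mem I_mem_F)

lemma ζ_mem_F : ζ ∈ F := by
  have h : ζ = (ζ^3)^3 * (ζ^8)^2 := by linear_combination (-ζ) * hζ24
  rw [h]
  exact F.mul_mem (F.pow_mem ζ3_mem_F 3) (F.pow_mem (K_mem_F ζ8_mem_K) 2)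

noncomputable def Eζ : IntermediateField ℚ ℂ := ℚ⟮ζ⟯

lemma hζint : IsIntegral ℚ ζ := (hζprim.isIntegral (by norm_num)).tower_top

lemma hζ19prim : IsPrimitiveRoot (ζ^19) 24 := hζprim.pow_of_coprime 19 (by norm_num)

lemma hroot : aeval (ζ^19) (minpoly ℚ (adjoin.powerBasis hζint).gen) = 0 := by
  rw [adjoin.powerBasis_gen]
  erw [IntermediateField.minpoly_gen]
  rw [
    ← Polynomial.cyclotomic_eq_minpoly_rat hζprim (by norm_num),
    aeval_def, eval₂_eq_eval_map, map_cyclotomic]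
  exact hζ19prim.isRoot_cyclotomic (by norm_num)

noncomputable def σ₀ : Eζ →ₐ[ℚ] ℂ := (adjoin.powerBasis hζint).lift (ζ^19) hroot

lemma σ₀_gen : σ₀ (AdjoinSimple.gen ℚ ζ) = ζ^19 := by
  have := (adjoin.powerBasis hζint).lift_gen (ζ^19) hroot
  rwa [adjoin.powerBasis_gen] at this

lemma hEF : Eζ ≤ F' := by rw [Eζ]; exact adjoin_simple_le_iff.mpr ζ_mem_F

lemma gen_int : IsIntegral ℚ (Complex.I * Real.sqrt 3 : ℂ) := by
  refine ⟨Polynomial.X^2 + Polynomial.C 3, ?_, ?_⟩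
  · apply Polynomial.monic_X_pow_add_C <;> norm_num
  · have h3 : (Real.sqrt 3 : ℂ)^2 = 3 := sqrt3_sq
    have hm : (algebraMap ℚ ℂ) 3 = 3 := by norm_num
    simp only [Polynomial.eval₂_add, Polynomial.eval₂_pow, Polynomial.eval₂_X,
      Polynomial.eval₂_C, hm]
    linear_combination (Complex.I^2) * sqrt3_sq + 3 * Complex.I_sq

instance : Algebra.IsAlgebraic ℚ K := by
  rw [K]; exact isAlgebraic_adjoin_simple gen_int

lemma F_alg : Algebra.IsAlgebraic K F := by
  rw [F]
  apply isAlgebraic_adjoin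
  rintro x ⟨a, ha⟩
  refine ⟨Polynomial.X^2 - Polynomial.C a, ?_, ?_⟩
  · apply Polynomial.monic_X_pow_sub_C <;> norm_num
  · simp [ha]

lemma F'_int {z : ℂ} (hz : z ∈ F') : IsIntegral ℚ z := by
  have h1 : IsAlgebraic K z := by
    have := F_alg.isAlgebraic ⟨z, hz⟩
    rwa [IntermediateField.isAlgebraic_iff] at this
  have h2 : IsIntegral K z := h1.isIntegral
  have h3 : Algebra.IsIntegral ℚ K := Algebra.IsAlgebraic.isIntegral
  exact isIntegral_trans z h2

instance : Algebra.IsAlgebraic ℚ F' := by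
  constructor
  intro x
  exact (IntermediateField.isAlgebraic_iff (x := x)).mpr (F'_int x.2).isAlgebraic

lemma extend_general {E L : Type} [Field E] [Field L] [Algebra ℚ E] [Algebra ℚ L]
    [Algebra.IsAlgebraic ℚ L] (g : E →ₐ[ℚ] ℂ) (j : E →ₐ[ℚ] L) :
    ∃ f : L →ₐ[ℚ] ℂ, ∀ x, f (j x) = g x := by
  letI : Algebra E L := j.toAlgebra
  letI : Algebra E ℂ := g.toAlgebra
  letI : IsScalarTower ℚ E L := IsScalarTower.of_algebraMap_eq fun q => (j.commutes q).symm
  haveI : Algebra.IsAlgebraic E L := Algebra.IsAlgebraic.tower_top (K := ℚ) E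
  haveI : Module.IsTorsionFree E ℂ := inferInstance
  let f := IsAlgClosed.lift (R := E) (S := L) (M := ℂ)
  refine ⟨{ toRingHom := f.toRingHom, commutes' := fun q => ?_ }, fun x => ?_⟩
  · have h1 : algebraMap ℚ L q = algebraMap E L (algebraMap ℚ E q) := by
      rw [← IsScalarTower.algebraMap_apply]
    show f (algebraMap ℚ L q) = _
    rw [h1, f.commutes]
    show g (algebraMap ℚ E q) = _
    rw [g.commutes]
  · show f (algebraMap E L x) = g x
    rw [f.commutes]
    rfl

noncomputable def τpair : {f : F' →ₐ[ℚ] ℂ // ∀ x : Eζ, f ⟨x.1, hEF x.2⟩ = σ₀ x} := by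
  have h := @extend_general _ _ _ _ _ _
    ⟨fun x => (IntermediateField.isAlgebraic_iff (x := x)).mpr (F'_int x.2).isAlgebraic⟩ σ₀
    (IntermediateField.inclusion hEF)
  exact ⟨h.choose, h.choose_spec⟩
noncomputable def τ : F' →ₐ[ℚ] ℂ := τpair.1

lemma τζ : τ ⟨ζ, ζ_mem_F⟩ = ζ^19 := by
  have := τpair.2 (AdjoinSimple.gen ℚ ζ)
  rw [← σ₀_gen]
  exact this

lemma mk_mul {x y : ℂ} (hx : x ∈ F) (hy : y ∈ F) (h : x*y ∈ F) :
    (⟨x*y, h⟩ : F') = ⟨x, hx⟩ * ⟨y, hy⟩ := rfl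

lemma mk_add {x y : ℂ} (hx : x ∈ F) (hy : y ∈ F) (h : x+y ∈ F) :
    (⟨x+y, h⟩ : F') = ⟨x, hx⟩ + ⟨y, hy⟩ := rfl

lemma mk_inv {x : ℂ} (hx : x ∈ F) (h : x⁻¹ ∈ F) :
    (⟨x⁻¹, h⟩ : F') = (⟨x, hx⟩ : F')⁻¹ := rfl

lemma mk_neg {x : ℂ} (hx : x ∈ F) (h : -x ∈ F) :
    (⟨-x, h⟩ : F') = -(⟨x, hx⟩ : F') := rfl

lemma mk_pow {x : ℂ} (hx : x ∈ F) (n : ℕ) (h : x^n ∈ F) :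
    (⟨x^n, h⟩ : F') = (⟨x, hx⟩ : F')^n := rfl

noncomputable def TfixSubalg : Subalgebra ℚ ℂ where
  carrier := {z : ℂ | ∃ h : z ∈ F, τ ⟨z, h⟩ = z}
  mul_mem' := by
    rintro x y ⟨hx, ex⟩ ⟨hy, ey⟩
    exact ⟨F.mul_mem hx hy, by rw [mk_mul hx hy, map_mul, ex, ey]⟩
  add_mem' := by
    rintro x y ⟨hx, ex⟩ ⟨hy, ey⟩
    exact ⟨F.add_mem hx hy, by rw [mk_add hx hy, map_add, ex, ey]⟩
  one_mem' := ⟨F.one_mem, by rw [show (⟨1, F.one_mem⟩ : F') = 1 from rfl, map_one]⟩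
  zero_mem' := ⟨F.zero_mem, by rw [show (⟨0, F.zero_mem⟩ : F') = 0 from rfl, map_zero]⟩
  algebraMap_mem' := by
    intro q
    refine ⟨K_mem_F (K.algebraMap_mem q), ?_⟩
    have h1 : (⟨algebraMap ℚ ℂ q, K_mem_F (K.algebraMap_mem q)⟩ : F') = algebraMap ℚ F' q := by
      apply Subtype.ext
      simp [IntermediateField.algebraMap_apply]
    rw [h1, τ.commutes]

noncomputable def Tfix : IntermediateField ℚ ℂ :=
  TfixSubalg.toIntermediateField (by
    rintro x ⟨hx, ex⟩
    exact ⟨F.inv_mem hx, by rw [mk_inv hx, map_inv₀, ex]⟩)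

lemma ζ152 : ζ^152 = ζ^8 := by
  have h : ζ^152 = (ζ^24)^6 * ζ^8 := by ring
  rw [h, hζ24, one_pow, one_mul]

lemma gen_fixed (h : (Complex.I * Real.sqrt 3 : ℂ) ∈ F) :
    τ ⟨(Complex.I * Real.sqrt 3 : ℂ), h⟩ = Complex.I * Real.sqrt 3 := by
  have e1 : (Complex.I * Real.sqrt 3 : ℂ) = 2 * ζ^8 + 1 := by
    rw [hζ8]; ring
  have e2 : (⟨(Complex.I * Real.sqrt 3 : ℂ), h⟩ : F') = 2 * (⟨ζ, ζ_mem_F⟩ : F')^8 + 1 := by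
    apply Subtype.ext
    push_cast [e1]
    norm_cast
  rw [e2, map_add, map_mul, map_pow, map_one, map_ofNat, τζ]
  have e3 : (ζ^19)^8 = ζ^8 := by
    have : (ζ^19)^8 = (ζ^24)^6 * ζ^8 := by ring
    rw [this, hζ24, one_pow, one_mul]
  rw [e3, ← e1]

lemma K_fixed {z : ℂ} (hz : z ∈ K) (h : z ∈ F) : τ ⟨z, h⟩ = z := by
  have hKT : K ≤ Tfix := by
    rw [K]
    exact adjoin_simple_le_iff.mpr ⟨K_mem_F gen_mem_K, gen_fixed _⟩
  obtain ⟨h', e⟩ := hKT hz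
  exact e

lemma τ_congr {z w : ℂ} (h : z ∈ F) (h' : w ∈ F) (e : z = w) : τ ⟨z, h⟩ = τ ⟨w, h'⟩ := by
  cases e; rfl

noncomputable def TsqSubalg : Subalgebra K ℂ where
  carrier := {z : ℂ | ∃ (h : z ∈ F) (h2 : τ ⟨z, h⟩ ∈ F), τ ⟨τ ⟨z, h⟩, h2⟩ = z}
  mul_mem' := by
    rintro x y ⟨hx, hx2, ex⟩ ⟨hy, hy2, ey⟩
    have e0 : τ ⟨x*y, F.mul_mem hx hy⟩ = τ ⟨x, hx⟩ * τ ⟨y, hy⟩ := by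
      rw [mk_mul hx hy, map_mul]
    have h2 : τ ⟨x*y, F.mul_mem hx hy⟩ ∈ F := by rw [e0]; exact F.mul_mem hx2 hy2
    refine ⟨F.mul_mem hx hy, h2, ?_⟩
    rw [τ_congr h2 (F.mul_mem hx2 hy2) e0, mk_mul hx2 hy2, map_mul, ex, ey]
  add_mem' := by
    rintro x y ⟨hx, hx2, ex⟩ ⟨hy, hy2, ey⟩
    have e0 : τ ⟨x+y, F.add_mem hx hy⟩ = τ ⟨x, hx⟩ + τ ⟨y, hy⟩ := by
      rw [mk_add hx hy, map_add]
    have h2 : τ ⟨x+y, F.add_mem hx hy⟩ ∈ F := by rw [e0]; exact F.add_mem hx2 hy2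
    refine ⟨F.add_mem hx hy, h2, ?_⟩
    rw [τ_congr h2 (F.add_mem hx2 hy2) e0, mk_add hx2 hy2, map_add, ex, ey]
  one_mem' := by
    have e0 : τ ⟨1, F.one_mem⟩ = 1 := by
      rw [show (⟨1, F.one_mem⟩ : F') = 1 from rfl, map_one]
    have h2 : τ ⟨1, F.one_mem⟩ ∈ F := by rw [e0]; exact F.one_mem
    refine ⟨F.one_mem, h2, ?_⟩
    rw [τ_congr h2 F.one_mem e0, e0]
  zero_mem' := by
    have e0 : τ ⟨0, F.zero_mem⟩ = 0 := by
      rw [show (⟨0, F.zero_mem⟩ : F') = 0 from rfl, map_zero]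
    have h2 : τ ⟨0, F.zero_mem⟩ ∈ F := by rw [e0]; exact F.zero_mem
    refine ⟨F.zero_mem, h2, ?_⟩
    rw [τ_congr h2 F.zero_mem e0, e0]
  algebraMap_mem' := by
    intro k
    have hk : (algebraMap K ℂ k : ℂ) ∈ K := by
      rw [IntermediateField.algebraMap_apply]; exact k.2
    have h : (algebraMap K ℂ k : ℂ) ∈ F := K_mem_F hk
    have e : τ ⟨algebraMap K ℂ k, h⟩ = algebraMap K ℂ k := K_fixed hk h
    have h2 : τ ⟨algebraMap K ℂ k, h⟩ ∈ F := by rw [e]; exact h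
    exact ⟨h, h2, by rw [τ_congr h2 h e, e]⟩

noncomputable def Tsq : IntermediateField K ℂ :=
  TsqSubalg.toIntermediateField (by
    rintro x ⟨hx, hx2, ex⟩
    have e0 : τ ⟨x⁻¹, F.inv_mem hx⟩ = (τ ⟨x, hx⟩)⁻¹ := by
      rw [mk_inv hx, map_inv₀]
    have h2 : τ ⟨x⁻¹, F.inv_mem hx⟩ ∈ F := by rw [e0]; exact F.inv_mem hx2
    refine ⟨F.inv_mem hx, h2, ?_⟩
    rw [τ_congr h2 (F.inv_mem hx2) e0, mk_inv hx2, map_inv₀, ex])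

lemma F_le_Tsq : F ≤ Tsq := by
  rw [F]
  apply adjoin_le_iff.mpr
  rintro x ⟨a, ha⟩
  have hx : x ∈ F := subset_adjoin _ _ ⟨a, ha⟩
  have haK : ((a : ℂ)) ∈ K := a.2
  have hx2a : (⟨x, hx⟩ : F')^2 = ⟨(a:ℂ), K_mem_F haK⟩ := by
    apply Subtype.ext
    push_cast
    exact ha
  have hy2 : (τ ⟨x, hx⟩)^2 = x^2 := by
    rw [← map_pow, hx2a, K_fixed haK, ha]
  have hcase : (τ ⟨x, hx⟩ - x) * (τ ⟨x, hx⟩ + x) = 0 := by linear_combination hy2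
  rcases mul_eq_zero.mp hcase with hc | hc
  · have hyx : τ ⟨x, hx⟩ = x := by linear_combination hc
    have h2 : τ ⟨x, hx⟩ ∈ F := by rw [hyx]; exact hx
    refine ⟨hx, h2, ?_⟩
    rw [τ_congr h2 hx hyx, hyx]
  · have hyx : τ ⟨x, hx⟩ = -x := by linear_combination hc
    have h2 : τ ⟨x, hx⟩ ∈ F := by rw [hyx]; exact F.neg_mem hx
    refine ⟨hx, h2, ?_⟩
    rw [τ_congr h2 (F.neg_mem hx) hyx, mk_neg hx, map_neg, hyx, neg_neg]

lemma ττ {z : ℂ} (h : z ∈ F) : ∃ h2 : τ ⟨z, h⟩ ∈ F, τ ⟨τ ⟨z, h⟩, h2⟩ = z := by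
  obtain ⟨h', h2, e⟩ := F_le_Tsq h
  exact ⟨h2, e⟩

lemma τI : τ ⟨Complex.I, I_mem_F⟩ = -Complex.I := by
  have e0 : (⟨Complex.I, I_mem_F⟩ : F') = (⟨ζ, ζ_mem_F⟩ : F')^6 := by
    apply Subtype.ext
    push_cast
    exact hζ6.symm
  rw [e0, map_pow, τζ]
  have e1 : (ζ^19)^6 = (ζ^24)^4 * (ζ^12 * ζ^6) := by ring
  rw [e1, hζ24, hζ12, hζ6, one_pow, one_mul, neg_one_mul]

lemma sqrt2_eq : (Real.sqrt 2 : ℂ) = ζ^3 - ζ^9 := by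
  have h9 : ζ^9 = ζ^6 * ζ^3 := by ring
  rw [h9, hζ6, hζ3]
  linear_combination (Real.sqrt 2 / 2 : ℂ) * Complex.I_sq

lemma τs2 : τ ⟨(Real.sqrt 2 : ℂ), sqrt2_mem_F⟩ = -(Real.sqrt 2 : ℂ) := by
  have e0 : (⟨(Real.sqrt 2 : ℂ), sqrt2_mem_F⟩ : F') = (⟨ζ, ζ_mem_F⟩ : F')^3 - (⟨ζ, ζ_mem_F⟩ : F')^9 := by
    apply Subtype.ext
    push_cast
    exact sqrt2_eq
  rw [e0, map_sub, map_pow, map_pow, τζ]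
  have key : ζ^9 - ζ^3 = -(Real.sqrt 2 : ℂ) := by
    rw [show ζ^9 - ζ^3 = ζ^6 * ζ^3 - ζ^3 from by ring, hζ6, hζ3]
    linear_combination ((Real.sqrt 2 : ℂ) / 2) * Complex.I_sq
  linear_combination key + (ζ^9*(ζ^24+1) - ζ^3*(ζ^144+ζ^120+ζ^96+ζ^72+ζ^48+ζ^24+1)) * hζ24

lemma mk_div {x y : ℂ} (hx : x ∈ F) (hy : y ∈ F) (h : x/y ∈ F) :
    (⟨x/y, h⟩ : F') = (⟨x, hx⟩ : F') / ⟨y, hy⟩ := rfl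

lemma τ_one_or_neg_one {ε : ℂ} (hε : ε = 1 ∨ ε = -1) (h : ε ∈ F) : τ ⟨ε, h⟩ = ε := by
  rcases hε with h1 | h1
  · rw [τ_congr h F.one_mem h1, show (⟨(1:ℂ), F.one_mem⟩ : F') = 1 from rfl, map_one, h1]
  · rw [τ_congr h (F.neg_mem F.one_mem) h1,
      show (⟨(-1:ℂ), F.neg_mem F.one_mem⟩ : F') = -1 from rfl, map_neg, map_one, h1]

lemma contra (u : ℂ) (huF : u ∈ F) (hmul : τ ⟨u, huF⟩ * u = 1)
    (ε δ : ℂ) (hε : ε = 1 ∨ ε = -1) (hδ : δ = 1 ∨ δ = -1)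
    (hu : u = (ε * Real.sqrt 2 + δ * Real.sqrt 2 * Complex.I)/2) : False := by
  have hc2 : (Real.sqrt 2 : ℂ)^2 = 2 := sqrt2_sq
  have hεF : ε ∈ F := by
    rcases hε with h|h
    · rw [h]; exact F.one_mem
    · rw [h]; exact F.neg_mem F.one_mem
  have hδF : δ ∈ F := by
    rcases hδ with h|h
    · rw [h]; exact F.one_mem
    · rw [h]; exact F.neg_mem F.one_mem
  have hmem : (ε * Real.sqrt 2 + δ * Real.sqrt 2 * Complex.I)/2 ∈ F :=
    F.div_mem (F.add_mem (F.mul_mem hεF sqrt2_mem_F)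
      (F.mul_mem (F.mul_mem hδF sqrt2_mem_F) I_mem_F)) two_mem_F
  have e0 : (⟨u, huF⟩ : F') =
      (⟨ε, hεF⟩ * ⟨(Real.sqrt 2 : ℂ), sqrt2_mem_F⟩ +
        ⟨δ, hδF⟩ * ⟨(Real.sqrt 2 : ℂ), sqrt2_mem_F⟩ * ⟨Complex.I, I_mem_F⟩)/2 := by
    apply Subtype.ext
    push_cast
    rw [hu]
    norm_cast
  have eτ : τ ⟨u, huF⟩ = (ε * (-(Real.sqrt 2:ℂ)) + δ * (-(Real.sqrt 2:ℂ)) * (-Complex.I))/2 := by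
    rw [e0, map_div₀, map_add, map_mul, map_mul, map_mul, τ_one_or_neg_one hε hεF,
      τ_one_or_neg_one hδ hδF, τs2, τI, map_ofNat]
  rw [eτ, hu] at hmul
  rcases hε with h1 | h1 <;> rcases hδ with h2 | h2 <;> rw [h1, h2] at hmul <;>
    [skip; skip; skip; skip] <;>
    · have h01 : (0:ℂ) = 1 := by
        linear_combination (1/2)*hmul - ((Complex.I^2 - 1)/8)*hc2 - (1/4)*Complex.I_sq
      exact zero_ne_one h01

theorem sqrt_ai_not_square_in_F (I : F) (hI : I ^ 2 = -1) (a : K) (ha : a ≠ 0) :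
    ¬ ∃ w : F, w ^ 4 = algebraMap K F a * I := by
  rintro ⟨w, hw⟩
  set J : ℂ := (I : ℂ) with hJdef
  set A : ℂ := (a : ℂ) with hAdef
  set W : ℂ := (w : ℂ) with hWdef
  have hJ2 : J^2 = -1 := by
    have := congrArg (fun x : F => (x : ℂ)) hI
    push_cast at this
    exact this
  have hW4 : W^4 = A * J := by
    have := congrArg (fun x : F => (x : ℂ)) hw
    push_cast at this
    exact this
  have hA0 : A ≠ 0 := by
    intro h
    exact ha (Subtype.ext h)
  have hJ0 : J ≠ 0 := by
    intro h
    rw [h] at hJ2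
    norm_num at hJ2
  have hW0 : W ≠ 0 := by
    intro h
    rw [h] at hW4
    exact (mul_ne_zero hA0 hJ0) (by linear_combination -hW4)
  have hWF : W ∈ F := w.2
  obtain ⟨hy2F, hyy⟩ := ττ hWF
  have hJF : J ∈ F := I.2
  have hτJ : τ ⟨J, hJF⟩ = -J := by
    have hcase : (J - Complex.I) * (J + Complex.I) = 0 := by
      linear_combination hJ2 - Complex.I_sq
    rcases mul_eq_zero.mp hcase with hc | hc
    · have hJI : J = Complex.I := by linear_combination hc
      rw [τ_congr hJF I_mem_F hJI, τI, hJI]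
    · have hJI : J = -Complex.I := by linear_combination hc
      rw [τ_congr hJF (F.neg_mem I_mem_F) hJI, mk_neg I_mem_F, map_neg, τI, neg_neg, hJI]
      norm_num
  have hAF : A ∈ F := K_mem_F a.2
  have hy4 : (τ ⟨W, hWF⟩)^4 = -(A*J) := by
    have e1 : (τ ⟨W, hWF⟩)^4 = τ ((⟨W, hWF⟩ : F')^4) := by rw [map_pow]
    have e2 : ((⟨W, hWF⟩ : F')^4) = ⟨A*J, F.mul_mem hAF hJF⟩ := by
      apply Subtype.ext; push_cast; exact hW4
    rw [e1, e2, mk_mul hAF hJF, map_mul, K_fixed a.2 hAF, hτJ]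
    ring
  have hy0 : τ ⟨W, hWF⟩ ≠ 0 := by
    intro h
    rw [h] at hy4
    exact (mul_ne_zero hA0 hJ0) (by linear_combination hy4)
  set u : ℂ := τ ⟨W, hWF⟩ / W with hudef
  have huF : u ∈ F := F.div_mem hy2F hWF
  have hu4 : u^4 = -1 := by
    rw [hudef, div_pow, hy4, hW4]
    field_simp
  have hmul : τ ⟨u, huF⟩ * u = 1 := by
    rw [show (⟨u, huF⟩ : F') = ⟨τ ⟨W, hWF⟩, hy2F⟩ / ⟨W, hWF⟩ from mk_div hy2F hWF huF,
      map_div₀, hyy, hudef]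
    field_simp
  have hc2 : (Real.sqrt 2 : ℂ)^2 = 2 := sqrt2_sq
  have hsplit : (u^2 - Complex.I) * (u^2 + Complex.I) = 0 := by
    linear_combination hu4 - Complex.I_sq
  rcases mul_eq_zero.mp hsplit with hs | hs
  · have h2 : (u - (Real.sqrt 2 + Real.sqrt 2 * Complex.I)/2) *
        (u + (Real.sqrt 2 + Real.sqrt 2 * Complex.I)/2) = 0 := by
      linear_combination hs - ((1+Complex.I)^2/4)*hc2 - (1/2)*Complex.I_sq
    rcases mul_eq_zero.mp h2 with hc | hc
    · exact contra u huF hmul 1 1 (Or.inl rfl) (Or.inl rfl) (by linear_combination hc)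
    · exact contra u huF hmul (-1) (-1) (Or.inr rfl) (Or.inr rfl) (by linear_combination hc)
  · have h2 : (u - (Real.sqrt 2 - Real.sqrt 2 * Complex.I)/2) *
        (u + (Real.sqrt 2 - Real.sqrt 2 * Complex.I)/2) = 0 := by
      linear_combination hs - ((1-Complex.I)^2/4)*hc2 - (1/2)*Complex.I_sq
    rcases mul_eq_zero.mp h2 with hc | hc
    · exact contra u huF hmul 1 (-1) (Or.inl rfl) (Or.inr rfl) (by linear_combination hc)
    · exact contra u huF hmul (-1) 1 (Or.inr rfl) (Or.inl rfl) (by linear_combination hc)
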